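/- arXiv:2511.21637 — 4 statements merged into one kernel-verified Lean document; each statement's English description precedes it below -/
import Mathlib

section
/- Under the KKT conditions of the Arctic Auction convex program (conditions (3)–(8) with λ ≤ 1, s > 0 ⟹ λ = 1), if a buyer i has s_i > 0 and x_{ik} > 0 for some good k, then α_i = 1 and moreover every good j with x_{ij} > 0 satisfies p_j = u_{ij} (i.e., i buys each allocated good exactly at her price upper bound). -/
/-- In the Arctic Auction, under the KKT conditions, if buyer `i` has money
returned (`s i > 0`) and is allocated a positive amount of some good `k`,
then her maximum bang per buck is `1` (it is attained at `k` with value `1`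
and no good gives bang per buck exceeding `1`), and every good allocated to
her is bought exactly at its price upper bound: `x i j > 0 → p j = u i j`. -/
theorem stmt_3 (nB nG : ℕ)
    (m : Fin nB → ℝ) (u : Fin nB → Fin nG → ℝ) (p : Fin nG → ℝ)
    (x : Fin nB → Fin nG → ℝ) (s : Fin nB → ℝ) (lam : ℝ)
    (hm : ∀ i, 0 < m i) (hp : ∀ j, 0 < p j) (hu : ∀ i j, 0 ≤ u i j)
    (hupos : ∀ i, ∃ j, 0 < u i j)
    (hx : ∀ i j, 0 ≤ x i j) (hs : ∀ i, 0 ≤ s i)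
    (hlam : lam ≤ 1)
    (h4 : (∃ i, 0 < s i) → lam = 1)
    (h5 : ∀ i j, u i j / p j ≤ ((∑ j', u i j' * x i j') + s i) / m i)
    (h6 : ∀ i j, 0 < x i j →
      u i j / p j = ((∑ j', u i j' * x i j') + s i) / m i)
    (h7 : ∀ i, m i / ((∑ j', u i j' * x i j') + s i) ≤ lam)
    (h8 : ∀ i, 0 < s i → lam = m i / ((∑ j', u i j' * x i j') + s i))
    (i : Fin nB) (k : Fin nG) (hsi : 0 < s i) (hik : 0 < x i k) :
    u i k / p k = 1 ∧ (∀ j, u i j / p j ≤ 1) ∧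
      (∀ j, 0 < x i j → p j = u i j) := by
  have hlam1 : lam = 1 := h4 ⟨i, hsi⟩
  have h8i := h8 i hsi
  set D := (∑ j', u i j' * x i j') + s i with hD
  have hDne : D ≠ 0 := by
    intro h
    rw [h, div_zero, hlam1] at h8i
    norm_num at h8i
  have hDm : D = m i := by
    field_simp [hlam1] at h8i
    rw [hlam1] at h8i
    linarith
  have hDmi : D / m i = 1 := by rw [hDm]; field_simp [(hm i).ne']
  have hk : u i k / p k = 1 := by rw [h6 i k hik, ← hD, hDmi]
  refine ⟨hk, fun j => ?_, fun j hxj => ?_⟩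
  · have := h5 i j
    rw [← hD, hDmi] at this
    exact this
  · have := h6 i j hxj
    rw [← hD, hDmi] at this
    rw [div_eq_one_iff_eq (hp j).ne'] at this
    exact this.symm
end

section
/- In a bipartite flow network N with source s, goods G (edges (s,j) of capacity p_j > 0), buyers B (edges (i,t) of capacity m_i − r_i ≥ 0), and infinite-capacity edges from goods to buyers, the cut ({s}, G ∪ B ∪ {t}) is a minimum s–t cut if and only if for every subset S ⊆ G, worth(S) := ∑_{j∈S} p_j ≤ worth(Γ(S)) := ∑_{i∈Γ(S)} (m_i − r_i), where Γ(S) ⊆ B is the set of buyers adjacent to S. -/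
open scoped Classical

/-- In the bipartite flow network `N(p,r)` — source edges `(s,j)` of capacity
`p j > 0`, sink edges `(i,t)` of capacity `c i = m i − r i ≥ 0`, and
infinite-capacity edges from goods to buyers given by `E` — the cut
`({s}, G ∪ B ∪ {t})` (of capacity `∑ j, p j`) is a minimum s–t cut iff for
every `S ⊆ G`, `worth(S) = ∑_{j∈S} p j ≤ worth(Γ(S)) = ∑_{i∈Γ(S)} c i`.
A finite-capacity cut is described by its source side `{s} ∪ S ∪ T` with
`S ⊆ G`, `T ⊆ B` and `Γ(S) ⊆ T` (no infinite edge crosses); its capacity is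
`∑_{j∉S} p j + ∑_{i∈T} c i`. -/
theorem stmt_16 (g b : ℕ) (p : Fin g → ℝ) (c : Fin b → ℝ)
    (E : Fin g → Fin b → Prop)
    (hp : ∀ j, 0 < p j) (hc : ∀ i, 0 ≤ c i) :
    (∀ (S : Finset (Fin g)) (T : Finset (Fin b)),
        (∀ j ∈ S, ∀ i, E j i → i ∈ T) →
        ∑ j, p j ≤ (∑ j ∈ Sᶜ, p j) + ∑ i ∈ T, c i)
      ↔
    (∀ S : Finset (Fin g),
        ∑ j ∈ S, p j ≤
          ∑ i ∈ Finset.univ.filter (fun i => ∃ j ∈ S, E j i), c i) := by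
  constructor
  · intro h S
    have := h S (Finset.univ.filter (fun i => ∃ j ∈ S, E j i))
      (fun j hj i hE => Finset.mem_filter.2 ⟨Finset.mem_univ i, j, hj, hE⟩)
    have hsplit : ∑ j, p j = (∑ j ∈ Sᶜ, p j) + ∑ j ∈ S, p j := by
      rw [add_comm, Finset.sum_add_sum_compl S p]
    linarith
  · intro h S T hT
    have h1 := h S
    have h2 : ∑ i ∈ Finset.univ.filter (fun i => ∃ j ∈ S, E j i), c i ≤ ∑ i ∈ T, c i := by
      apply Finset.sum_le_sum_of_subset_of_nonneg
      · intro i hi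
        obtain ⟨-, j, hj, hE⟩ := Finset.mem_filter.1 hi
        exact hT j hj i hE
      · intro i _ _; exact hc i
    have hsplit : ∑ j, p j = (∑ j ∈ Sᶜ, p j) + ∑ j ∈ S, p j := by
      rw [add_comm, Finset.sum_add_sum_compl S p]
    linarith
end

section
/- In the bipartite flow network N(p,r), suppose ({s}, G∪B∪{t}) is not a min s–t cut after setting buyer i's capacity to zero, and let (s ∪ S ∪ T, rest) be a maximal s–t min cut with S ⊆ G, T ⊆ B (computing worth(T) with buyer i's money set to 0). If buyer i's capacity is then set to worth(S) − worth(T) > 0, then ({s}, G∪B∪{t}) becomes an s–t min cut again, and (s ∪ S ∪ T, rest) is also a min cut (S is a tight set). -/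
open scoped Classical

/-- Returning partial money (Lemma `Inv-partial`). In the network `N(p,r)`
with buyer `i₀`'s sink capacity set to `0`, suppose `({s}, G∪B∪{t})` is not a
min s–t cut, and `(s ∪ S ∪ T, rest)` is a maximal min cut (so `i₀ ∈ T`, and
every cut avoiding `i₀` has capacity at least `∑ j, p j`, by the Invariant
that held before `i₀`'s capacity was zeroed). Let
`β = worth(S) − worth(T) > 0` (worth of `T` computed with `i₀`'s money `0`).
After setting buyer `i₀`'s capacity to `β`, the cut `({s}, G∪B∪{t})` is again
a min s–t cut, and `(s ∪ S ∪ T, rest)` is also a min cut, i.e. `S` is tight. -/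
theorem stmt_17 (g b : ℕ) (p : Fin g → ℝ) (c : Fin b → ℝ)
    (E : Fin g → Fin b → Prop) (i₀ : Fin b)
    (hp : ∀ j, 0 < p j) (hc : ∀ i, 0 ≤ c i)
    (S : Finset (Fin g)) (T : Finset (Fin b))
    -- `c₀` : capacities with buyer `i₀`'s money set to 0
    (c₀ : Fin b → ℝ) (hc₀ : c₀ = Function.update c i₀ 0)
    -- `(S, T)` is a valid cut containing `i₀` on the source side
    (hST : ∀ j ∈ S, ∀ i, E j i → i ∈ T) (hi₀T : i₀ ∈ T)
    -- `(S, T)` is a min cut when `i₀`'s capacity is 0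
    (hmin : ∀ (S' : Finset (Fin g)) (T' : Finset (Fin b)),
        (∀ j ∈ S', ∀ i, E j i → i ∈ T') →
        (∑ j ∈ Sᶜ, p j) + ∑ i ∈ T, c₀ i ≤ (∑ j ∈ S'ᶜ, p j) + ∑ i ∈ T', c₀ i)
    -- the trivial cut `({s}, G∪B∪{t})` is not a min cut
    (hnotmin : (∑ j ∈ Sᶜ, p j) + ∑ i ∈ T, c₀ i < ∑ j, p j)
    -- Invariant before zeroing: every valid cut avoiding `i₀` has capacity `≥ ∑ p`
    (hno : ∀ (S' : Finset (Fin g)) (T' : Finset (Fin b)),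
        (∀ j ∈ S', ∀ i, E j i → i ∈ T') → i₀ ∉ T' →
        ∑ j, p j ≤ (∑ j ∈ S'ᶜ, p j) + ∑ i ∈ T', c₀ i)
    -- `β = worth(S) − worth(T)` and the new capacities `cβ`
    (β : ℝ) (hβ : β = (∑ j ∈ S, p j) - ∑ i ∈ T, c₀ i)
    (cβ : Fin b → ℝ) (hcβ : cβ = Function.update c i₀ β) :
    (0 < β) ∧
    (∀ (S' : Finset (Fin g)) (T' : Finset (Fin b)),
        (∀ j ∈ S', ∀ i, E j i → i ∈ T') →
        ∑ j, p j ≤ (∑ j ∈ S'ᶜ, p j) + ∑ i ∈ T', cβ i) ∧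
    ((∑ j ∈ Sᶜ, p j) + ∑ i ∈ T, cβ i = ∑ j, p j) := by
  have hsplit : (∑ j ∈ Sᶜ, p j) + ∑ j ∈ S, p j = ∑ j, p j := by
    rw [add_comm]
    exact Finset.sum_add_sum_compl S p
  -- key: for T' containing i₀, ∑ cβ = ∑ c₀ + β
  have hsum : ∀ T' : Finset (Fin b), i₀ ∈ T' →
      ∑ i ∈ T', cβ i = (∑ i ∈ T', c₀ i) + β := by
    intro T' hi
    rw [← Finset.add_sum_erase _ _ hi, ← Finset.add_sum_erase _ _ hi]
    have h1 : ∀ i ∈ T'.erase i₀, cβ i = c₀ i := by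
      intro i hi'
      have hne := Finset.ne_of_mem_erase hi'
      simp [hcβ, hc₀, Function.update_of_ne hne]
    rw [Finset.sum_congr rfl h1, hcβ, hc₀]
    simp [add_comm, add_assoc, add_left_comm]
  have hsumeq : ∀ T' : Finset (Fin b), i₀ ∉ T' →
      ∑ i ∈ T', cβ i = ∑ i ∈ T', c₀ i := by
    intro T' hi
    refine Finset.sum_congr rfl fun i hi' => ?_
    have hne : i ≠ i₀ := fun h => hi (h ▸ hi')
    simp [hcβ, hc₀, Function.update_of_ne hne]
  have hβpos : 0 < β := by
    rw [hβ]
    have := hnotmin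
    linarith [hsplit]
  have hthird : (∑ j ∈ Sᶜ, p j) + ∑ i ∈ T, cβ i = ∑ j, p j := by
    rw [hsum T hi₀T, hβ]
    linarith [hsplit]
  refine ⟨hβpos, ?_, hthird⟩
  intro S' T' hcut
  by_cases hi : i₀ ∈ T'
  · rw [hsum T' hi]
    have := hmin S' T' hcut
    have h2 : (∑ j ∈ Sᶜ, p j) + ∑ i ∈ T, c₀ i + β = ∑ j, p j := by
      rw [hβ]; linarith [hsplit]
    linarith
  · rw [hsumeq T' hi]
    exact hno S' T' hcut hi
end

section
/- Let f and f* be maximum flows in networks N and N* respectively, where N* is obtained from N by (weakly) increasing source-edge capacities and possibly adding edges, with sink-edge capacities fixed. If for some buyer i its surplus satisfies γ_i(f*) = γ_i(f) − σ with σ > 0, and f* is a balanced flow in N* (minimizing the ℓ₂ norm of the surplus vector), then ‖γ(f*)‖₂² ≤ ‖γ(f)‖₂² − σ². -/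
/-- A bipartite flow network on goods `Fin g` and buyers `Fin b`: source-edge
capacities `a j` for goods, sink-edge capacities `cap i` for buyers, and
infinite-capacity good-to-buyer edges given by `E`. -/
structure FlowNet (g b : ℕ) where
  a : Fin g → ℝ
  cap : Fin b → ℝ
  E : Fin g → Fin b → Prop

namespace FlowNet

variable {g b : ℕ}

/-- A flow is recorded by the amounts `f j i` routed on good-to-buyer edges
(the flows on source and sink edges are determined by conservation). -/
def Feasible (N : FlowNet g b) (f : Fin g → Fin b → ℝ) : Prop :=
  (∀ j i, 0 ≤ f j i) ∧ (∀ j i, 0 < f j i → N.E j i) ∧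
  (∀ j, ∑ i, f j i ≤ N.a j) ∧ (∀ i, ∑ j, f j i ≤ N.cap i)

def value (f : Fin g → Fin b → ℝ) : ℝ := ∑ j, ∑ i, f j i

def IsMaxFlow (N : FlowNet g b) (f : Fin g → Fin b → ℝ) : Prop :=
  N.Feasible f ∧ ∀ f', N.Feasible f' → value f' ≤ value f

/-- The surplus of buyer `i` under flow `f`: the residual capacity of the
edge `(i,t)`. -/
def surplus (N : FlowNet g b) (f : Fin g → Fin b → ℝ) (i : Fin b) : ℝ :=
  N.cap i - ∑ j, f j i

/-- A balanced flow minimizes the ℓ₂ norm of the surplus vector over all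
feasible flows. -/
def IsBalanced (N : FlowNet g b) (f : Fin g → Fin b → ℝ) : Prop :=
  N.Feasible f ∧
    ∀ f', N.Feasible f' → ∑ i, (N.surplus f i) ^ 2 ≤ ∑ i, (N.surplus f' i) ^ 2

end FlowNet

/-- Lemma `surplus-decrease`: let `f` and `f*` be maximum flows in `N` and
`N*`, where `N*` is obtained from `N` by weakly increasing source capacities
and possibly adding good-to-buyer edges, with sink capacities unchanged. If
`f*` is balanced in `N*` and the surplus of some buyer `i` satisfies
`γ_i(f*) = γ_i(f) − σ` with `σ > 0`, then
`‖γ(f*)‖₂² ≤ ‖γ(f)‖₂² − σ²`. -/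
theorem stmt_18 (g b : ℕ) (N Nstar : FlowNet g b)
    (ha : ∀ j, N.a j ≤ Nstar.a j) (hE : ∀ j i, N.E j i → Nstar.E j i)
    (hcap : Nstar.cap = N.cap)
    (f fstar : Fin g → Fin b → ℝ)
    (hf : N.IsMaxFlow f) (hfstar : Nstar.IsMaxFlow fstar)
    (hbal : Nstar.IsBalanced fstar)
    (i : Fin b) (σ : ℝ) (hσ : 0 < σ)
    (hdrop : Nstar.surplus fstar i = N.surplus f i - σ) :
    ∑ i', (Nstar.surplus fstar i') ^ 2 ≤ (∑ i', (N.surplus f i') ^ 2) - σ ^ 2 := by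
  obtain ⟨⟨hfpos, hfE, hfa, hfcap⟩, -⟩ := hf
  obtain ⟨⟨hspos, hsE, hsa, hscap⟩, hbmin⟩ := hbal
  set δ : Fin b → ℝ := fun i' => N.surplus f i' - Nstar.surplus fstar i' with hδ
  set c : ℝ := ∑ i', Nstar.surplus fstar i' * δ i' with hc
  set d : ℝ := ∑ i', (δ i') ^ 2 with hd
  have hδeq : ∀ i', δ i' = (∑ j, fstar j i') - ∑ j, f j i' := by
    intro i'
    simp only [hδ, FlowNet.surplus, hcap]
    ring
  -- feasibility of convex combinations
  have key : ∀ lam : ℝ, 0 ≤ lam → lam ≤ 1 → 0 ≤ 2 * lam * c + lam ^ 2 * d := by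
    intro lam h0 h1
    set flam : Fin g → Fin b → ℝ := fun j i' => fstar j i' + lam * (f j i' - fstar j i')
      with hflam
    have hfeas : Nstar.Feasible flam := by
      refine ⟨?_, ?_, ?_, ?_⟩
      · intro j i'
        have h1' := hfpos j i'; have h2' := hspos j i'
        simp only [hflam]; nlinarith
      · intro j i' hpos
        by_cases hb : 0 < fstar j i'
        · exact hsE j i' hb
        · have hb0 : fstar j i' = 0 := le_antisymm (not_lt.mp hb) (hspos j i')
          have hfp : 0 < f j i' := by
            simp only [hflam, hb0] at hpos
            rcases (hfpos j i').lt_or_eq with h | h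
            · exact h
            · exfalso; rw [← h] at hpos; simp at hpos
          exact hE j i' (hfE j i' hfp)
      · intro j
        have heq : ∑ i', flam j i' =
            ∑ i', fstar j i' + lam * (∑ i', f j i' - ∑ i', fstar j i') := by
          simp only [hflam]
          rw [Finset.sum_add_distrib, ← Finset.mul_sum, Finset.sum_sub_distrib]
        rw [heq]
        have hfj : ∑ i', f j i' ≤ Nstar.a j := (hfa j).trans (ha j)
        nlinarith [hsa j]
      · intro i'
        have heq : ∑ j, flam j i' =
            ∑ j, fstar j i' + lam * (∑ j, f j i' - ∑ j, fstar j i') := by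
          simp only [hflam]
          rw [Finset.sum_add_distrib, ← Finset.mul_sum, Finset.sum_sub_distrib]
        rw [heq]
        have hfi : ∑ j, f j i' ≤ Nstar.cap i' := by rw [hcap]; exact hfcap i'
        nlinarith [hscap i']
    have hsurp : ∀ i', Nstar.surplus flam i' = Nstar.surplus fstar i' + lam * δ i' := by
      intro i'
      have heq : ∑ j, flam j i' =
          ∑ j, fstar j i' + lam * (∑ j, f j i' - ∑ j, fstar j i') := by
        simp only [hflam]
        rw [Finset.sum_add_distrib, ← Finset.mul_sum, Finset.sum_sub_distrib]
      simp only [FlowNet.surplus, heq, hδeq i']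
      ring
    have hmin := hbmin flam hfeas
    have hexp : ∑ i', (Nstar.surplus flam i') ^ 2 =
        ∑ i', (Nstar.surplus fstar i') ^ 2 + (2 * lam * c + lam ^ 2 * d) := by
      simp only [hsurp]
      simp only [hc, hd, Finset.mul_sum]
      rw [← Finset.sum_add_distrib, ← Finset.sum_add_distrib]
      apply Finset.sum_congr rfl
      intro x _
      ring
    linarith [hmin, hexp ▸ hmin]
  have hd0 : 0 ≤ d := Finset.sum_nonneg fun x _ => sq_nonneg _
  have hcge : 0 ≤ c := by
    by_contra hcneg
    push_neg at hcneg
    rcases hd0.lt_or_eq with hdpos | hdz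
    · have hlam0 : 0 < min 1 (-c / d) := by
        apply lt_min one_pos
        exact div_pos (neg_pos.mpr hcneg) hdpos
      have hlam1 : min 1 (-c / d) ≤ 1 := min_le_left _ _
      have := key _ hlam0.le hlam1
      have h2 : min 1 (-c / d) * d ≤ -c := by
        calc min 1 (-c / d) * d ≤ (-c / d) * d :=
              mul_le_mul_of_nonneg_right (min_le_right _ _) hd0
          _ = -c := by field_simp
      nlinarith
    · have := key 1 zero_le_one le_rfl
      nlinarith
  have hδi : δ i = σ := by simp [hδ, hdrop]
  have hdge : σ ^ 2 ≤ d := by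
    rw [← hδi]
    exact Finset.single_le_sum (fun x _ => sq_nonneg (δ x)) (Finset.mem_univ i)
  have hexp2 : ∑ i', (N.surplus f i') ^ 2 =
      ∑ i', (Nstar.surplus fstar i') ^ 2 + (2 * c + d) := by
    have : ∀ i', N.surplus f i' = Nstar.surplus fstar i' + δ i' := by
      intro i'; simp [hδ]
    simp only [this]
    simp only [hc, hd, Finset.mul_sum]
    rw [← Finset.sum_add_distrib, ← Finset.sum_add_distrib]
    apply Finset.sum_congr rfl
    intro x _
    ring
  linarith
end
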